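/- Let c ∈ ℝ and let φ : ℝ → ℝ be continuously differentiable, 2π-periodic, even, nonconstant, and nondecreasing on the interval (−π, 0). Assume that for all x ∈ (−π, 0), φ'(x)·(φ(x) − c) = (1/(2π))·∫_{−π}^{0} (log|sin((x−y)/2)| − log|sin((x+y)/2)|)·φ'(y) dy. Then for all x ∈ (−π, 0) one has φ'(x) > 0 and φ(x) < c. -/

import Mathlib

open Set MeasureTheory Real

lemma II_log_abs (a b : ℝ) :
    IntervalIntegrable (fun t => Real.log |t|) volume a b := by
  have key : ∀ R : ℝ, 0 < R → IntervalIntegrable (fun t => Real.log |t|) volume 0 R := by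
    intro R hR
    rw [intervalIntegrable_iff_integrableOn_Ioc_of_le hR.le]
    have h1 : IntegrableOn (fun t => Real.log R - Real.log t) (Ioc 0 R) volume := by
      apply intervalIntegral.integrableOn_deriv_right_of_nonneg
        (g := fun t => (1 + Real.log R) * t - t * Real.log t)
      · exact ((continuous_const.mul continuous_id).sub Real.continuous_mul_log).continuousOn
      · intro t ht
        have h := ((hasDerivAt_id t).const_mul (1 + Real.log R)).sub
          (Real.hasDerivAt_mul_log (ne_of_gt ht.1))
        have : (1 + Real.log R) * 1 - (Real.log t + 1) = Real.log R - Real.log t := by ring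
        rw [this] at h
        exact h.hasDerivWithinAt
      · intro t ht
        have := Real.log_le_log ht.1 ht.2.le
        linarith
    have h2 : IntegrableOn (fun t => Real.log t) (Ioc 0 R) volume := by
      have hc : IntegrableOn (fun _ : ℝ => Real.log R) (Ioc 0 R) volume :=
        integrableOn_const measure_Ioc_lt_top.ne
      have h3 : IntegrableOn (fun t : ℝ => Real.log R - (Real.log R - Real.log t))
          (Ioc 0 R) volume := hc.sub h1
      exact h3.congr_fun (fun t _ => by ring) measurableSet_Ioc
    exact h2.congr_fun (fun t ht => by rw [abs_of_pos ht.1]) measurableSet_Ioc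
  set R : ℝ := max 1 (max |a| |b|) with hRdef
  have hR : 0 < R := lt_of_lt_of_le one_pos (le_max_left _ _)
  have h0R := key R hR
  have hneg : IntervalIntegrable (fun t => Real.log |t|) volume (-R) 0 := by
    have := (IntervalIntegrable.iff_comp_neg).1 h0R
    simp only [neg_zero] at this
    have h2 : IntervalIntegrable (fun t => Real.log |t|) volume 0 (-R) := by
      refine this.congr ?_
      intro t _; simp [abs_neg]
    exact h2.symm
  have hfull : IntervalIntegrable (fun t => Real.log |t|) volume (-R) R := hneg.trans h0R
  refine hfull.mono_set ?_
  have hhi : |a| ≤ R := le_trans (le_max_left _ _) (le_max_right _ _)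
  have hhi' : |b| ≤ R := le_trans (le_max_right _ _) (le_max_right _ _)
  rw [uIcc_of_le (by linarith [abs_nonneg a] : (-R) ≤ R)]
  apply uIcc_subset_Icc <;> constructor <;>
    [skip; skip; skip; skip] <;> cases' abs_le.1 hhi with h1 h2 <;>
    cases' abs_le.1 hhi' with h3 h4 <;> linarith

lemma kernel_neg {x y : ℝ} (hx : x ∈ Ioo (-Real.pi) 0) (hy : y ∈ Ioo (-Real.pi) 0)
    (hxy : y ≠ x) :
    Real.log |Real.sin ((x - y) / 2)| < Real.log |Real.sin ((x + y) / 2)| := by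
  obtain ⟨hx1, hx2⟩ := hx
  obtain ⟨hy1, hy2⟩ := hy
  have hpi := Real.pi_pos
  have hsx : Real.sin x < 0 := Real.sin_neg_of_neg_of_neg_pi_lt hx2 hx1
  have hsy : Real.sin y < 0 := Real.sin_neg_of_neg_of_neg_pi_lt hy2 hy1
  have h1 : (0:ℝ) < |Real.sin ((x - y) / 2)| := by
    rw [abs_pos]
    rw [Ne, Real.sin_eq_zero_iff_of_lt_of_lt (by linarith) (by linarith)]
    intro h
    apply hxy
    have : x - y = 0 := by linarith
    linarith
  have h2 : |Real.sin ((x - y) / 2)| < |Real.sin ((x + y) / 2)| := by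
    rw [Real.abs_sin_half, Real.abs_sin_half]
    apply Real.sqrt_lt_sqrt (by nlinarith [Real.cos_le_one (x - y)])
    have hc1 : Real.cos (x - y) = Real.cos x * Real.cos y + Real.sin x * Real.sin y :=
      Real.cos_sub x y
    have hc2 : Real.cos (x + y) = Real.cos x * Real.cos y - Real.sin x * Real.sin y :=
      Real.cos_add x y
    nlinarith
  exact Real.log_lt_log h1 h2

lemma integrableOn_kernel (g : ℝ → ℝ) (hg : Continuous g) {x : ℝ}
    (hx : x ∈ Ioo (-Real.pi) 0) :
    IntegrableOn (fun y =>
      (Real.log |Real.sin ((x - y) / 2)| - Real.log |Real.sin ((x + y) / 2)|) * g y)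
      (Ioc (-Real.pi) 0) volume := by
  obtain ⟨hx1, hx2⟩ := hx
  have hpi := Real.pi_pos
  set S : Set ℝ := Ioc (-Real.pi) 0 with hS
  -- L2 * g is continuous on the compact interval
  have hL2g : IntegrableOn (fun y => Real.log |Real.sin ((x + y) / 2)| * g y) S volume := by
    have hcont : ContinuousOn (fun y => Real.log |Real.sin ((x + y) / 2)| * g y)
        (Icc (-Real.pi) 0) := by
      apply ContinuousOn.mul _ hg.continuousOn
      apply ContinuousOn.log
      · exact ((Real.continuous_sin.comp ((continuous_const.add continuous_id).div_const 2)).abs).continuousOn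
      · intro y hy
        have h : Real.sin ((x + y) / 2) < 0 := by
          apply Real.sin_neg_of_neg_of_neg_pi_lt
          · have := hy.2; linarith
          · have := hy.1; linarith
        simp only [abs_ne_zero]; exact h.ne
    exact (hcont.integrableOn_compact isCompact_Icc).mono_set Ioc_subset_Icc_self
  -- the correction term r
  set r : ℝ → ℝ := fun y => Real.log |Real.sin ((x - y) / 2)| - (Real.log |x - y| - Real.log 2)
    with hr
  have hrmeas : Measurable r := by
    apply Measurable.sub
    · exact Real.measurable_log.comp
        ((Real.continuous_sin.comp ((continuous_const.sub continuous_id).div_const 2)).abs).measurable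
    · exact (Real.measurable_log.comp
        ((continuous_const.sub continuous_id).abs).measurable).sub measurable_const
  have hrbdd : ∀ y ∈ S, ‖r y‖ ≤ Real.log 2 := by
    intro y hy
    have hyx : |x - y| < Real.pi := by
      rw [abs_lt]
      constructor
      · have := hy.2; linarith
      · have := hy.1; linarith
    rcases eq_or_ne y x with h | h
    · subst h
      simp only [hr, sub_self, abs_zero, Real.log_zero, zero_div, Real.sin_zero]
      have hl2 : (0:ℝ) ≤ Real.log 2 := Real.log_nonneg (by norm_num)
      simp [Real.norm_eq_abs, abs_of_nonneg hl2]
    · have hu : x - y ≠ 0 := sub_ne_zero.2 (fun h' => h h'.symm)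
      set u : ℝ := (x - y) / 2 with hudef
      have hu0 : u ≠ 0 := by simp [hudef, hu]
      have huabs : |u| ≤ Real.pi / 2 := by
        rw [hudef, abs_div, abs_two]
        rw [div_le_div_iff₀ (by norm_num) (by norm_num : (0:ℝ) < 2)] at *
        nlinarith [hyx]
      have hlow : 2 / Real.pi * |u| ≤ |Real.sin u| := Real.mul_abs_le_abs_sin huabs
      have hhigh : |Real.sin u| ≤ |u| := Real.abs_sin_le_abs
      have hupos : 0 < |u| := abs_pos.2 hu0
      have hlogxy : Real.log |x - y| = Real.log 2 + Real.log |u| := by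
        have : |x - y| = 2 * |u| := by
          rw [hudef, abs_div, abs_two]; ring
        rw [this, Real.log_mul (by norm_num) (ne_of_gt hupos)]
      have h1 : Real.log |Real.sin u| ≤ Real.log |u| :=
        Real.log_le_log (lt_of_lt_of_le (by positivity) hlow) hhigh
      have h2 : Real.log (2 / Real.pi) + Real.log |u| ≤ Real.log |Real.sin u| := by
        rw [← Real.log_mul (by positivity) (ne_of_gt hupos)]
        exact Real.log_le_log (by positivity) hlow
      have hrval : r y = Real.log |Real.sin u| - Real.log |u| := by
        rw [hr]; simp only [← hudef, hlogxy]; ring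
      rw [hrval, Real.norm_eq_abs, abs_le]
      have hl2 : Real.log (2 / Real.pi) = Real.log 2 - Real.log Real.pi :=
        Real.log_div (by norm_num) (ne_of_gt hpi)
      have hpil : Real.log Real.pi ≤ Real.log 2 + Real.log 2 := by
        rw [← Real.log_mul (by norm_num) (by norm_num)]
        apply Real.log_le_log hpi
        norm_num
        nlinarith [Real.pi_lt_d2]
      constructor
      · nlinarith [h2, hl2, hpil]
      · have := Real.log_nonneg (by norm_num : (1:ℝ) ≤ 2)
        linarith [h1]
  have hrint : IntegrableOn r S volume := by
    have hconst : IntegrableOn (fun _ : ℝ => Real.log 2) S volume :=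
      integrableOn_const measure_Ioc_lt_top.ne
    apply Integrable.mono' hconst (hrmeas.aestronglyMeasurable.restrict)
    rw [ae_restrict_iff' measurableSet_Ioc]
    exact Filter.Eventually.of_forall hrbdd
  -- log |x - y| is integrable
  have hlog1 : IntegrableOn (fun y => Real.log |x - y|) S volume := by
    have h := (II_log_abs (x + Real.pi) x).comp_sub_left x
    have h2 : IntervalIntegrable (fun y => Real.log |x - y|) volume (-Real.pi) 0 := by
      have e1 : x - (x + Real.pi) = -Real.pi := by ring
      have e2 : x - x = 0 := by ring
      rwa [e1, e2] at h
    rwa [intervalIntegrable_iff_integrableOn_Ioc_of_le (by linarith)] at h2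
  -- L1 integrable
  have hL1 : IntegrableOn (fun y => Real.log |Real.sin ((x - y) / 2)|) S volume := by
    have hconst : IntegrableOn (fun _ : ℝ => Real.log 2) S volume :=
      integrableOn_const measure_Ioc_lt_top.ne
    have h : IntegrableOn (fun y => Real.log |x - y| - Real.log 2 + r y) S volume :=
      (hlog1.sub hconst).add hrint
    apply h.congr_fun _ measurableSet_Ioc
    intro y _
    simp only [hr]
    ring
  -- L1 * g integrable
  have hC : ∃ C, ∀ y ∈ Icc (-Real.pi) 0, ‖g y‖ ≤ C :=
    isCompact_Icc.exists_bound_of_continuousOn hg.continuousOn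
  obtain ⟨C, hC⟩ := hC
  have hL1g : IntegrableOn (fun y => Real.log |Real.sin ((x - y) / 2)| * g y) S volume := by
    have h := Integrable.bdd_mul (c := C) hL1 (hg.aestronglyMeasurable.restrict) ?_
    · exact h.congr (Filter.EventuallyEq.of_eq (funext fun y => mul_comm _ _))
    · rw [ae_restrict_iff' measurableSet_Ioc]
      exact Filter.Eventually.of_forall fun y hy => hC y (Ioc_subset_Icc_self hy)
  have hsub : IntegrableOn (fun y => Real.log |Real.sin ((x - y) / 2)| * g y
      - Real.log |Real.sin ((x + y) / 2)| * g y) S volume := hL1g.sub hL2g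
  apply hsub.congr_fun _ measurableSet_Ioc
  intro y _
  ring

lemma deriv_nonneg_of_monotoneOn {f : ℝ → ℝ} (hf : Differentiable ℝ f) {a b x : ℝ}
    (hx : x ∈ Ioo a b) (hm : MonotoneOn f (Ioo a b)) : 0 ≤ deriv f x := by
  have hd : HasDerivAt f (deriv f x) x := (hf x).hasDerivAt
  rw [hasDerivAt_iff_tendsto_slope] at hd
  have hd' : Filter.Tendsto (slope f x) (nhdsWithin x (Ioi x)) (nhds (deriv f x)) :=
    hd.mono_left (nhdsWithin_mono x (fun y hy => ne_of_gt hy))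
  apply ge_of_tendsto hd'
  filter_upwards [Ioo_mem_nhdsGT_of_mem ⟨le_refl x, hx.2⟩] with y hy
  have hxy : x < y := hy.1
  have hmle : f x ≤ f y := hm hx ⟨lt_trans hx.1 hxy, hy.2⟩ hxy.le
  rw [slope_def_field]
  apply div_nonneg (by linarith) (by linarith)

theorem stmt_1 (c : ℝ) (φ : ℝ → ℝ)
    (hC1 : ContDiff ℝ 1 φ)
    (hper : ∀ x, φ (x + 2 * Real.pi) = φ x)
    (heven : ∀ x, φ (-x) = φ x)
    (hnonconst : ∃ a b, φ a ≠ φ b)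
    (hmono : MonotoneOn φ (Ioo (-Real.pi) 0))
    (heq : ∀ x ∈ Ioo (-Real.pi) 0,
      deriv φ x * (φ x - c) =
        (1 / (2 * Real.pi)) * ∫ y in (-Real.pi)..0,
          (Real.log |Real.sin ((x - y) / 2)| - Real.log |Real.sin ((x + y) / 2)|) * deriv φ y) :
    ∀ x ∈ Ioo (-Real.pi) 0, 0 < deriv φ x ∧ φ x < c := by
  have hpi := Real.pi_pos
  have hdiff : Differentiable ℝ φ := hC1.differentiable (by norm_num)
  have hcd : Continuous (deriv φ) := hC1.continuous_deriv le_rfl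
  have hnn : ∀ y ∈ Ioo (-Real.pi) 0, 0 ≤ deriv φ y :=
    fun y hy => deriv_nonneg_of_monotoneOn hdiff hy hmono
  -- derivative is odd
  have hodd : ∀ x, deriv φ (-x) = - deriv φ x := by
    intro x
    have h : (fun y => φ (-y)) = φ := funext heven
    have h2 := deriv_comp_neg (f := φ) (x := x)
    rw [h] at h2
    linarith
  -- derivative is periodic
  have hperd : ∀ x, deriv φ (x + 2 * Real.pi) = deriv φ x := by
    intro x
    have h : (fun y => φ (y + 2 * Real.pi)) = φ := funext hper
    have h2 := deriv_comp_add_const φ (2 * Real.pi) x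
    rw [h] at h2
    exact h2.symm
  -- there is a point with positive derivative
  have hex : ∃ x₁ ∈ Ioo (-Real.pi) 0, 0 < deriv φ x₁ := by
    by_contra hcon
    push_neg at hcon
    have hzero : ∀ y ∈ Ioo (-Real.pi) 0, deriv φ y = 0 :=
      fun y hy => le_antisymm (hcon y hy) (hnn y hy)
    have hset : IsClosed {y : ℝ | deriv φ y = 0} := isClosed_eq hcd continuous_const
    have hz2 : ∀ y ∈ Icc (-Real.pi) 0, deriv φ y = 0 := by
      intro y hy
      have hcl : Icc (-Real.pi) 0 = closure (Ioo (-Real.pi) 0) :=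
        (closure_Ioo (by linarith : (-Real.pi) ≠ 0)).symm
      rw [hcl] at hy
      exact hset.closure_subset_iff.2 (fun z hz => hzero z hz) hy
    have hz3 : ∀ y ∈ Icc (-Real.pi) Real.pi, deriv φ y = 0 := by
      intro y hy
      rcases le_or_gt y 0 with h | h
      · exact hz2 y ⟨hy.1, h⟩
      · have h0 : deriv φ (-y) = 0 := hz2 (-y) ⟨by linarith [hy.2], by linarith⟩
        rw [hodd y] at h0
        linarith
    have hz : ∀ y, deriv φ y = 0 := by
      intro y
      set k : ℤ := ⌈(-Real.pi - y) / (2 * Real.pi)⌉ with hk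
      have h2pi : (0:ℝ) < 2 * Real.pi := by linarith
      have hk1 : (-Real.pi - y) / (2 * Real.pi) ≤ (k:ℝ) := Int.le_ceil _
      have hk2 : (k:ℝ) < (-Real.pi - y) / (2 * Real.pi) + 1 := Int.ceil_lt_add_one _
      have hmem : y + (k:ℝ) * (2 * Real.pi) ∈ Icc (-Real.pi) Real.pi := by
        constructor
        · have h4 := (div_le_iff₀ h2pi).1 hk1
          linarith
        · have h3 := mul_lt_mul_of_pos_right hk2 h2pi
          rw [add_mul, one_mul, div_mul_cancel₀ _ (ne_of_gt h2pi)] at h3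
          linarith
      have hperF : Function.Periodic (deriv φ) (2 * Real.pi) := hperd
      have h5 := hperF.sub_int_mul_eq (x := y + (k:ℝ) * (2 * Real.pi)) k
      have h6 : y + (k:ℝ) * (2 * Real.pi) - (k:ℝ) * (2 * Real.pi) = y := by ring
      rw [h6] at h5
      rw [h5]
      exact hz3 _ hmem
    obtain ⟨a, b, hab⟩ := hnonconst
    exact hab (is_const_of_deriv_eq_zero hdiff hz a b)
  obtain ⟨x₁, hx₁, hx₁pos⟩ := hex
  -- main argument
  intro x hx
  set S : Set ℝ := Ioc (-Real.pi) 0 with hS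
  set F : ℝ → ℝ := fun y =>
    (Real.log |Real.sin ((x - y) / 2)| - Real.log |Real.sin ((x + y) / 2)|) * deriv φ y with hF
  have hInt : IntegrableOn F S volume := integrableOn_kernel (deriv φ) hcd hx
  -- pointwise nonpositivity away from x
  have hpt : ∀ y ∈ S, y ≠ x → F y ≤ 0 := by
    intro y hy hyx
    rcases eq_or_lt_of_le hy.2 with h0 | h0
    · have : (x + y) / 2 = (x - y) / 2 := by rw [h0]; ring
      simp only [hF, this, sub_self, zero_mul, le_refl]
    · have hker := kernel_neg hx ⟨hy.1, h0⟩ hyx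
      exact mul_nonpos_of_nonpos_of_nonneg (by linarith) (hnn y ⟨hy.1, h0⟩)
  -- a.e. nonpositivity
  have hxnull : (volume.restrict S) {x} = 0 := by
    rw [Measure.restrict_apply (measurableSet_singleton x)]
    exact measure_mono_null inter_subset_left Real.volume_singleton
  have hane : ∀ᵐ y ∂(volume.restrict S), y ≠ x := by
    rw [Filter.eventually_iff, mem_ae_iff]
    convert hxnull using 2
    ext y; simp
  have hamem : ∀ᵐ y ∂(volume.restrict S), y ∈ S := ae_restrict_mem measurableSet_Ioc
  have hae : ∀ᵐ y ∂(volume.restrict S), F y ≤ 0 := by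
    filter_upwards [hane, hamem] with y h1 h2
    exact hpt y h2 h1
  have hIle : ∫ y in S, F y ∂volume ≤ 0 := integral_nonpos_of_ae hae
  -- strict negativity
  have hIne : ∫ y in S, F y ∂volume ≠ 0 := by
    intro hI0
    have hintneg : Integrable (fun y => -F y) (volume.restrict S) := hInt.neg
    have haeneg : 0 ≤ᵐ[volume.restrict S] (fun y => -F y) := by
      filter_upwards [hae] with y h
      simp only [Pi.zero_apply]
      linarith
    have hzero : (fun y => -F y) =ᵐ[volume.restrict S] 0 := by
      rw [← integral_eq_zero_iff_of_nonneg_ae haeneg hintneg]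
      simp [integral_neg, hI0]
    -- find an interval around x₁ where deriv φ > 0
    have hU : IsOpen ((deriv φ) ⁻¹' (Ioi 0) ∩ Ioo (-Real.pi) 0) :=
      (isOpen_Ioi.preimage hcd).inter isOpen_Ioo
    have hx₁U : x₁ ∈ (deriv φ) ⁻¹' (Ioi 0) ∩ Ioo (-Real.pi) 0 := ⟨hx₁pos, hx₁⟩
    obtain ⟨ε, hε, hball⟩ := Metric.isOpen_iff.1 hU x₁ hx₁U
    rw [Real.ball_eq_Ioo] at hball
    set T : Set ℝ := Ioo (x₁ - ε) (x₁ + ε) \ {x} with hT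
    have hTsub : T ⊆ {y | ¬ (-F y = 0)} := by
      intro y hy
      have hyU := hball hy.1
      have hyIoo : y ∈ Ioo (-Real.pi) 0 := hyU.2
      have hyx : y ≠ x := hy.2
      have hker := kernel_neg hx hyIoo hyx
      have hFy : F y < 0 := mul_neg_of_neg_of_pos (by linarith) hyU.1
      simp only [mem_setOf_eq]
      intro h; linarith [neg_eq_zero.1 h]
    have hTnull : (volume.restrict S) T = 0 := by
      have := hzero
      rw [Filter.EventuallyEq, Filter.eventually_iff, mem_ae_iff] at this
      apply measure_mono_null _ this
      intro y hy
      simp only [mem_compl_iff, mem_setOf_eq, Pi.zero_apply]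
      exact hTsub hy
    have hTS : T ⊆ S := fun y hy => Ioo_subset_Ioc_self (hball hy.1).2
    have hTmeas : MeasurableSet T := measurableSet_Ioo.diff (measurableSet_singleton x)
    rw [Measure.restrict_apply hTmeas, inter_eq_self_of_subset_left hTS] at hTnull
    have hvol : volume T = volume (Ioo (x₁ - ε) (x₁ + ε)) :=
      measure_diff_null Real.volume_singleton
    rw [hvol, Real.volume_Ioo] at hTnull
    have : x₁ + ε - (x₁ - ε) = 2 * ε := by ring
    rw [this] at hTnull
    simp only [ENNReal.ofReal_eq_zero] at hTnull
    linarith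
  have hIlt : ∫ y in S, F y ∂volume < 0 := lt_of_le_of_ne hIle hIne
  have heqx := heq x hx
  have hIeq : (∫ y in (-Real.pi)..0, F y) = ∫ y in S, F y ∂volume :=
    intervalIntegral.integral_of_le (by linarith)
  rw [hIeq] at heqx
  have hfactor : (0:ℝ) < 1 / (2 * Real.pi) := by positivity
  have hlhs : deriv φ x * (φ x - c) < 0 := by
    rw [heqx]
    exact mul_neg_of_pos_of_neg hfactor hIlt
  have hgx : 0 ≤ deriv φ x := hnn x hx
  have hgxpos : 0 < deriv φ x := by
    rcases eq_or_lt_of_le hgx with h | h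
    · rw [← h, zero_mul] at hlhs; linarith
    · exact h
  refine ⟨hgxpos, ?_⟩
  nlinarith
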